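/- Let M be an n-maniplex and let u, v lie in the same connected component F of M_{[n]\{i_1,...,i_k}} where −1 = i_0 < i_1 < ... < i_k ≤ n−1 and i_{k+1} := n. Then there exist vertices u = w_0, w_1, ..., w_{k+1} = v in F such that for each j = 0,...,k there is a path from w_j to w_{j+1} using only edges of colours strictly between i_j and i_{j+1}. -/

import Mathlib

/-- An `n`-maniplex on vertex (flag) set `V`: a nonempty, connected, properly
`n`-edge-coloured simple `n`-regular graph (encoded by the fixed-point-free
involutions `σ i` giving the unique `i`-neighbour of each vertex) such that the
2-factors of colours `i`, `j` with `|i - j| > 1` are 4-cycles. -/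
structure Maniplex (n : ℕ) (V : Type) where
  nonempty : Nonempty V
  σ : Fin n → V → V
  invol : ∀ i v, σ i (σ i v) = v
  nofix : ∀ i v, σ i v ≠ v
  conn : ∀ u v : V, Relation.ReflTransGen (fun x y => ∃ i, σ i x = y) u v
  comm : ∀ i j : Fin n, (i : ℕ) + 1 < (j : ℕ) → ∀ v,
    σ i (σ j v) = σ j (σ i v) ∧ σ i v ≠ σ j v

namespace Maniplex

variable {n : ℕ} {V : Type}

/-- There is a path from `u` to `v` using only edges with colours in `A`. -/
def ReachIn (M : Maniplex n V) (A : Set (Fin n)) (u v : V) : Prop :=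
  Relation.ReflTransGen (fun x y => ∃ i ∈ A, M.σ i x = y) u v

/-- The `i`-face of `M` containing `v`: the connected component of `v` in the
spanning subgraph with all edges of colour `i` deleted. -/
def face (M : Maniplex n V) (i : Fin n) (v : V) : Set V :=
  {u | M.ReachIn {j | j ≠ i} v u}

/-- `S` is an `i`-face of `M`. -/
def IsFace (M : Maniplex n V) (i : Fin n) (S : Set V) : Prop :=
  ∃ v, S = M.face i v

end Maniplex

/-- Every allowed colour lies strictly between two consecutive listed values. -/
private lemma exists_idx {n k : ℕ} (ι : Fin (k + 2) → ℤ) (hmono : StrictMono ι)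
    (h0 : ι 0 = -1) (hlast : ι (Fin.last (k + 1)) = (n : ℤ)) (c : Fin n)
    (hc : ∀ a : Fin k, ((c : ℕ) : ℤ) ≠ ι a.succ.castSucc) :
    ∃ a : Fin (k + 1), ι a.castSucc < ((c : ℕ) : ℤ) ∧ ((c : ℕ) : ℤ) < ι a.succ := by
  classical
  set T : Finset (Fin (k + 2)) := Finset.univ.filter (fun j => ι j < ((c : ℕ) : ℤ)) with hT
  have h0T : (0 : Fin (k + 2)) ∈ T := by
    simp only [hT, Finset.mem_filter, Finset.mem_univ, true_and, h0]
    have : (0 : ℤ) ≤ ((c : ℕ) : ℤ) := Int.ofNat_nonneg _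
    omega
  set a' := T.max' ⟨0, h0T⟩ with ha'
  have ha'T : a' ∈ T := T.max'_mem _
  have hlt : ι a' < ((c : ℕ) : ℤ) := by
    simpa [hT, Finset.mem_filter] using ha'T
  have hcn : ((c : ℕ) : ℤ) < (n : ℤ) := by exact_mod_cast c.isLt
  have ha'ne : a' ≠ Fin.last (k + 1) := by
    intro h
    rw [h, hlast] at hlt
    omega
  have ha'lt : a'.val < k + 1 := by
    have h1 : a'.val < k + 2 := a'.isLt
    have h2 : a'.val ≠ k + 1 := fun h => ha'ne (Fin.ext h)
    omega
  refine ⟨⟨a'.val, ha'lt⟩, ?_, ?_⟩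
  · have : (⟨a'.val, ha'lt⟩ : Fin (k + 1)).castSucc = a' := Fin.ext rfl
    rw [this]; exact hlt
  · set a : Fin (k + 1) := ⟨a'.val, ha'lt⟩ with ha
    have hnot : a.succ ∉ T := by
      intro hmem
      have := T.le_max' a.succ hmem
      have hv : a.succ.val ≤ a'.val := this
      simp [ha, Fin.val_succ] at hv
    have hle : ((c : ℕ) : ℤ) ≤ ι a.succ := by
      by_contra h
      exact hnot (by simp [hT, Finset.mem_filter]; omega)
    rcases lt_or_eq_of_le hle with h | h
    · exact h
    · exfalso
      by_cases hk : a.val + 1 = k + 1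
      · have : a.succ = Fin.last (k + 1) := Fin.ext (by simp [Fin.val_succ, hk])
        rw [this, hlast] at h
        omega
      · have hak : a.val < k := by
          have := a.isLt
          omega
        have : a.succ = (⟨a.val, hak⟩ : Fin k).succ.castSucc := by
          apply Fin.ext
          simp [Fin.val_succ]
        rw [this] at h
        exact hc ⟨a.val, hak⟩ h

/-- Let `u`, `v` lie in the same connected component of `M` with the colours
`i_1 < ... < i_k` deleted (here `ι : Fin (k+2) → ℤ` lists
`-1 = i_0 < i_1 < ... < i_k < i_{k+1} = n`).  Then there are vertices
`u = w_0, w_1, ..., w_{k+1} = v` in that component such that for each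
`j = 0, ..., k` there is a path from `w_j` to `w_{j+1}` using only colours
strictly between `i_j` and `i_{j+1}`. -/
theorem really_ordered_paths {n : ℕ} {V : Type} (M : Maniplex n V) (k : ℕ)
    (ι : Fin (k + 2) → ℤ) (hmono : StrictMono ι) (h0 : ι 0 = -1)
    (hlast : ι (Fin.last (k + 1)) = (n : ℤ)) (u v : V)
    (huv : M.ReachIn {c | ∀ a : Fin k, ((c : ℕ) : ℤ) ≠ ι a.succ.castSucc} u v) :
    ∃ w : Fin (k + 2) → V, w 0 = u ∧ w (Fin.last (k + 1)) = v ∧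
      (∀ a, M.ReachIn {c | ∀ a' : Fin k, ((c : ℕ) : ℤ) ≠ ι a'.succ.castSucc}
        u (w a)) ∧
      ∀ a : Fin (k + 1),
        M.ReachIn {c | ι a.castSucc < ((c : ℕ) : ℤ) ∧ ((c : ℕ) : ℤ) < ι a.succ}
          (w a.castSucc) (w a.succ) := by
  induction huv with
  | refl =>
      exact ⟨fun _ => u, rfl, rfl, fun _ => Relation.ReflTransGen.refl,
        fun _ => Relation.ReflTransGen.refl⟩
  | tail _ step ih =>
      rename_i v' v hv'
      obtain ⟨w, hw0, hwlast, hwreach, hwseg⟩ := ih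
      obtain ⟨i, hi, hσ⟩ := step
      obtain ⟨a, hai1, hai2⟩ := exists_idx ι hmono h0 hlast i hi
      refine ⟨fun c => if c.val ≤ a.val then w c else M.σ i (w c), ?_, ?_, ?_, ?_⟩
      · simp [hw0]
      · have : ¬ (Fin.last (k + 1)).val ≤ a.val := by
          have := a.isLt; simp only [Fin.val_last]; omega
        simp only [this, if_false, hwlast, hσ]
      · intro c
        by_cases hca : c.val ≤ a.val
        · simpa [hca] using hwreach c
        · simp only [hca, if_false]
          exact (hwreach c).tail ⟨i, hi, rfl⟩
      · intro b
        rcases lt_trichotomy b.val a.val with hb | hb | hb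
        · have h1 : b.castSucc.val ≤ a.val := by simp [Fin.castSucc]; omega
          have h2 : b.succ.val ≤ a.val := by simp [Fin.val_succ]; omega
          simp only [h1, h2, if_true]
          exact hwseg b
        · have hba : b = a := Fin.ext hb
          subst hba
          have h1 : b.castSucc.val ≤ b.val := le_refl _
          have h2 : ¬ b.succ.val ≤ b.val := by simp [Fin.val_succ]
          simp only [h1, if_true, h2, if_false]
          exact (hwseg b).tail ⟨i, ⟨hai1, hai2⟩, rfl⟩
        · have h1 : ¬ b.castSucc.val ≤ a.val := by simp [Fin.castSucc]; omega
          have h2 : ¬ b.succ.val ≤ a.val := by simp [Fin.val_succ]; omega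
          simp only [h1, if_false, h2, if_false]
          -- lift the path for segment b along σ i, using commutativity
          have hle : ι a.succ ≤ ι b.castSucc := by
            apply hmono.monotone
            simp [Fin.le_def, Fin.val_succ]
            omega
          refine Relation.ReflTransGen.lift (M.σ i) ?_ _ _ (hwseg b)
          rintro x y ⟨j, ⟨hj1, hj2⟩, hjxy⟩
          refine ⟨j, ⟨hj1, hj2⟩, ?_⟩
          have hcomm : (i : ℕ) + 1 < (j : ℕ) := by
            have : ((i : ℕ) : ℤ) + 1 ≤ ι a.succ := hai2
            have : ((i : ℕ) : ℤ) + 1 < ((j : ℕ) : ℤ) := by omega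
            exact_mod_cast this
          rw [← hjxy]
          exact (M.comm i j hcomm x).1.symm
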